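/- In the setting of the chosen (E,M)-factorizations N_{Q,T} of the canonical morphisms c_{Q,T}, for all Q ⊆ Q' and T ⊆ T': if the canonical morphism u_{Q⊆Q',T'} : N_{Q,T'} → N_{Q',T'} is an isomorphism, then so is u_{Q⊆Q',T} : N_{Q,T} → N_{Q',T}; dually, if the canonical morphism v_{Q',T⊆T'} : N_{Q',T'} → N_{Q',T} is an isomorphism, then so is v_{Q,T⊆T'} : N_{Q,T'} → N_{Q,T}. -/
import Mathlib


open CategoryTheory

/-- A factorization system `(E, M)` on a category `C`. -/
structure FactSys {C : Type*} [Category C] (E M : MorphismProperty C) : Prop where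
  E_iso : ∀ {X Y : C} (f : X ⟶ Y), IsIso f → E f
  M_iso : ∀ {X Y : C} (f : X ⟶ Y), IsIso f → M f
  E_comp : ∀ {X Y Z : C} (f : X ⟶ Y) (g : Y ⟶ Z), E f → E g → E (f ≫ g)
  M_comp : ∀ {X Y Z : C} (f : X ⟶ Y) (g : Y ⟶ Z), M f → M g → M (f ≫ g)
  fact : ∀ {X Y : C} (f : X ⟶ Y), ∃ (Z : C) (e : X ⟶ Z) (m : Z ⟶ Y), E e ∧ M m ∧ e ≫ m = f
  diag : ∀ {X Y Z W : C} (e : X ⟶ Y) (m : Z ⟶ W) (u : X ⟶ Z) (v : Y ⟶ W),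
    E e → M m → e ≫ v = u ≫ m → ∃! d : Y ⟶ Z, e ≫ d = u ∧ d ≫ m = v

/-- The setting of the chosen `(E,M)`-factorizations `N Q T` of the canonical morphisms
`c_{Q,T} : ∐_Q X ⟶ ∏_T Y` induced by the language `ℓ`: for every `Q` there is a copower
`P Q` of `X` over `Q` (with injections `ι`), for every `T` a power `R T` of `Y` over `T`
(with projections `π`), and for all `Q, T` a chosen factorization
`e Q T : P Q ⟶ N Q T` in `E`, `m Q T : N Q T ⟶ R T` in `M` of `c_{Q,T}`. -/
structure Setup (A : Type) {C : Type*} [Category C] (E M : MorphismProperty C)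
    (X Y : C) (ℓ : List A → (X ⟶ Y)) where
  P : Set (List A) → C
  ι : ∀ (Q : Set (List A)) (q : List A), q ∈ Q → (X ⟶ P Q)
  hP : ∀ (Q : Set (List A)) (Z : C) (f : ∀ q : List A, q ∈ Q → (X ⟶ Z)),
    ∃! g : P Q ⟶ Z, ∀ (q : List A) (hq : q ∈ Q), ι Q q hq ≫ g = f q hq
  R : Set (List A) → C
  π : ∀ (T : Set (List A)) (t : List A), t ∈ T → (R T ⟶ Y)
  hR : ∀ (T : Set (List A)) (Z : C) (f : ∀ t : List A, t ∈ T → (Z ⟶ Y)),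
    ∃! g : Z ⟶ R T, ∀ (t : List A) (ht : t ∈ T), g ≫ π T t ht = f t ht
  N : Set (List A) → Set (List A) → C
  e : ∀ Q T : Set (List A), P Q ⟶ N Q T
  m : ∀ Q T : Set (List A), N Q T ⟶ R T
  he : ∀ Q T : Set (List A), E (e Q T)
  hm : ∀ Q T : Set (List A), M (m Q T)
  hfact : ∀ (Q T : Set (List A)) (q : List A) (hq : q ∈ Q) (t : List A) (ht : t ∈ T),
    ι Q q hq ≫ e Q T ≫ m Q T ≫ π T t ht = ℓ (q ++ t)

namespace Setup

variable {A : Type} {C : Type*} [Category C] {E M : MorphismProperty C}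
  {X Y : C} {ℓ : List A → (X ⟶ Y)}

/-- `u` is the canonical morphism `u_{Q⊆Q',T} : N Q T ⟶ N Q' T`:
it satisfies `u ∘ e_{Q,T} = e_{Q',T} ∘ (canonical inclusion)` and
`m_{Q',T} ∘ u = m_{Q,T}`. -/
def IsU (S : Setup A E M X Y ℓ) {Q Q' : Set (List A)} (T : Set (List A))
    (h : Q ⊆ Q') (u : S.N Q T ⟶ S.N Q' T) : Prop :=
  (∀ (q : List A) (hq : q ∈ Q),
    S.ι Q q hq ≫ S.e Q T ≫ u = S.ι Q' q (h hq) ≫ S.e Q' T) ∧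
  u ≫ S.m Q' T = S.m Q T

/-- `v` is the canonical morphism `v_{Q,T⊆T'} : N Q T' ⟶ N Q T`:
it satisfies `v ∘ e_{Q,T'} = e_{Q,T}` and
`m_{Q,T} ∘ v = (canonical restriction) ∘ m_{Q,T'}`. -/
def IsV (S : Setup A E M X Y ℓ) {T T' : Set (List A)} (Q : Set (List A))
    (h : T ⊆ T') (v : S.N Q T' ⟶ S.N Q T) : Prop :=
  (S.e Q T' ≫ v = S.e Q T) ∧
  (∀ (t : List A) (ht : t ∈ T),
    v ≫ S.m Q T ≫ S.π T t ht = S.m Q T' ≫ S.π T' t (h ht))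

end Setup

section Aux

variable {C : Type*} [Category C] {E M : MorphismProperty C}

lemma FactSys.isIso_of_EM (fs : FactSys E M) {X Y : C} (f : X ⟶ Y)
    (hE : E f) (hM : M f) : IsIso f := by
  obtain ⟨d, ⟨h1, h2⟩, _⟩ := fs.diag f f (𝟙 _) (𝟙 _) hE hM (by simp)
  exact ⟨d, h1, h2⟩

lemma FactSys.E_cancel (fs : FactSys E M) {X Y Z : C} (f : X ⟶ Y) (g : Y ⟶ Z)
    (hf : E f) (hfg : E (f ≫ g)) : E g := by
  obtain ⟨W, e, m, he, hm, hem⟩ := fs.fact g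
  have hfe : E (f ≫ e) := fs.E_comp f e hf he
  obtain ⟨d, ⟨hd1, hd2⟩, _⟩ := fs.diag (f ≫ g) m (f ≫ e) (𝟙 _) hfg hm (by
    rw [Category.comp_id, Category.assoc, hem])
  obtain ⟨d', _, hu⟩ := fs.diag (f ≫ e) m (f ≫ e) m hfe hm rfl
  have h1 : m ≫ d = 𝟙 _ := by
    rw [hu (m ≫ d) ⟨by rw [← Category.assoc, Category.assoc f e m, hem, hd1],
        by rw [Category.assoc, hd2, Category.comp_id]⟩,
      hu (𝟙 _) ⟨Category.comp_id _, Category.id_comp _⟩]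
  have : IsIso m := ⟨d, h1, hd2⟩
  rw [← hem]
  exact fs.E_comp e m he (fs.E_iso m this)

lemma FactSys.M_cancel (fs : FactSys E M) {X Y Z : C} (f : X ⟶ Y) (g : Y ⟶ Z)
    (hg : M g) (hfg : M (f ≫ g)) : M f := by
  obtain ⟨W, e, m, he, hm, hem⟩ := fs.fact f
  have hmg : M (m ≫ g) := fs.M_comp m g hm hg
  obtain ⟨d, ⟨hd1, hd2⟩, _⟩ := fs.diag e (f ≫ g) (𝟙 _) (m ≫ g) he hfg (by
    rw [Category.id_comp, ← Category.assoc, hem])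
  obtain ⟨d', _, hu⟩ := fs.diag e (m ≫ g) e (m ≫ g) he hmg rfl
  have h1 : d ≫ e = 𝟙 _ := by
    rw [hu (d ≫ e) ⟨by rw [← Category.assoc, hd1, Category.id_comp],
        by rw [Category.assoc, ← Category.assoc e m g, hem, hd2]⟩,
      hu (𝟙 _) ⟨Category.comp_id _, Category.id_comp _⟩]
  have : IsIso e := ⟨d, hd1, h1⟩
  rw [← hem]
  exact fs.M_comp e m (fs.M_iso e this) hm

end Aux

namespace Setup

variable {A : Type} {C : Type*} [Category C] {E M : MorphismProperty C}
  {X Y : C} {ℓ : List A → (X ⟶ Y)}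

lemma P_ext (S : Setup A E M X Y ℓ) {Q : Set (List A)} {Z : C} {f g : S.P Q ⟶ Z}
    (h : ∀ (q : List A) (hq : q ∈ Q), S.ι Q q hq ≫ f = S.ι Q q hq ≫ g) : f = g := by
  obtain ⟨w, hw, hu⟩ := S.hP Q Z (fun q hq => S.ι Q q hq ≫ g)
  rw [hu f h, hu g (fun _ _ => rfl)]

lemma R_ext (S : Setup A E M X Y ℓ) {T : Set (List A)} {Z : C} {f g : Z ⟶ S.R T}
    (h : ∀ (t : List A) (ht : t ∈ T), f ≫ S.π T t ht = g ≫ S.π T t ht) : f = g := by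
  obtain ⟨w, hw, hu⟩ := S.hR T Z (fun t ht => g ≫ S.π T t ht)
  rw [hu f h, hu g (fun _ _ => rfl)]

lemma existsU (S : Setup A E M X Y ℓ) (fs : FactSys E M)
    {Q Q' : Set (List A)} (T : Set (List A)) (hQ : Q ⊆ Q') :
    ∃ u : S.N Q T ⟶ S.N Q' T, S.IsU T hQ u := by
  obtain ⟨incl, hincl, _⟩ := S.hP Q (S.P Q') (fun q hq => S.ι Q' q (hQ hq))
  have hsq : S.e Q T ≫ S.m Q T = (incl ≫ S.e Q' T) ≫ S.m Q' T := by
    refine S.P_ext (fun q hq => S.R_ext (fun t ht => ?_))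
    simp only [Category.assoc]
    rw [S.hfact Q T q hq t ht, ← Category.assoc (S.ι Q q hq) incl, hincl,
      S.hfact Q' T q (hQ hq) t ht]
  obtain ⟨u, ⟨hu1, hu2⟩, _⟩ := fs.diag (S.e Q T) (S.m Q' T) (incl ≫ S.e Q' T)
    (S.m Q T) (S.he Q T) (S.hm Q' T) hsq
  exact ⟨u, fun q hq => by rw [hu1, ← Category.assoc, hincl], hu2⟩

lemma existsV (S : Setup A E M X Y ℓ) (fs : FactSys E M)
    (Q : Set (List A)) {T T' : Set (List A)} (hT : T ⊆ T') :
    ∃ v : S.N Q T' ⟶ S.N Q T, S.IsV Q hT v := by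
  obtain ⟨r, hr, _⟩ := S.hR T (S.R T') (fun t ht => S.π T' t (hT ht))
  have hsq : S.e Q T' ≫ (S.m Q T' ≫ r) = S.e Q T ≫ S.m Q T := by
    refine S.P_ext (fun q hq => S.R_ext (fun t ht => ?_))
    simp only [Category.assoc]
    rw [hr, S.hfact Q T q hq t ht]
    have := S.hfact Q T' q hq t (hT ht)
    simpa using this
  obtain ⟨v, ⟨hv1, hv2⟩, _⟩ := fs.diag (S.e Q T') (S.m Q T) (S.e Q T)
    (S.m Q T' ≫ r) (S.he Q T') (S.hm Q T) (by rw [hsq])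
  refine ⟨v, hv1, fun t ht => ?_⟩
  rw [← Category.assoc, hv2, Category.assoc, hr]

lemma M_of_isU (S : Setup A E M X Y ℓ) (fs : FactSys E M)
    {Q Q' T : Set (List A)} {hQ : Q ⊆ Q'} {u : S.N Q T ⟶ S.N Q' T}
    (hu : S.IsU T hQ u) : M u :=
  fs.M_cancel u (S.m Q' T) (S.hm Q' T) (by rw [hu.2]; exact S.hm Q T)

lemma E_of_isV (S : Setup A E M X Y ℓ) (fs : FactSys E M)
    {Q T T' : Set (List A)} {hT : T ⊆ T'} {v : S.N Q T' ⟶ S.N Q T}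
    (hv : S.IsV Q hT v) : E v :=
  fs.E_cancel (S.e Q T') v (S.he Q T') (by rw [hv.1]; exact S.he Q T)

lemma square (S : Setup A E M X Y ℓ) (fs : FactSys E M)
    {Q Q' T T' : Set (List A)} {hQ : Q ⊆ Q'} {hT : T ⊆ T'}
    {v : S.N Q T' ⟶ S.N Q T} {u : S.N Q T ⟶ S.N Q' T}
    {u' : S.N Q T' ⟶ S.N Q' T'} {v' : S.N Q' T' ⟶ S.N Q' T}
    (hv : S.IsV Q hT v) (hu : S.IsU T hQ u)
    (hu' : S.IsU T' hQ u') (hv' : S.IsV Q' hT v') :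
    v ≫ u = u' ≫ v' := by
  obtain ⟨d, _, hd⟩ := fs.diag (S.e Q T') (S.m Q' T) (S.e Q T' ≫ (v ≫ u))
    ((v ≫ u) ≫ S.m Q' T) (S.he Q T') (S.hm Q' T) (by simp)
  have h1 : S.e Q T' ≫ (u' ≫ v') = S.e Q T' ≫ (v ≫ u) := by
    refine S.P_ext (fun q hq => ?_)
    calc S.ι Q q hq ≫ S.e Q T' ≫ u' ≫ v'
        = (S.ι Q q hq ≫ S.e Q T' ≫ u') ≫ v' := by simp
      _ = (S.ι Q' q (hQ hq) ≫ S.e Q' T') ≫ v' := by rw [hu'.1 q hq]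
      _ = S.ι Q' q (hQ hq) ≫ S.e Q' T' ≫ v' := by simp
      _ = S.ι Q' q (hQ hq) ≫ S.e Q' T := by rw [hv'.1]
      _ = S.ι Q q hq ≫ S.e Q T ≫ u := (hu.1 q hq).symm
      _ = (S.ι Q q hq ≫ S.e Q T) ≫ u := by simp
      _ = (S.ι Q q hq ≫ S.e Q T' ≫ v) ≫ u := by rw [hv.1]
      _ = S.ι Q q hq ≫ S.e Q T' ≫ v ≫ u := by simp
  have h2 : (u' ≫ v') ≫ S.m Q' T = (v ≫ u) ≫ S.m Q' T := by
    refine S.R_ext (fun t ht => ?_)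
    calc ((u' ≫ v') ≫ S.m Q' T) ≫ S.π T t ht
        = u' ≫ v' ≫ S.m Q' T ≫ S.π T t ht := by simp
      _ = u' ≫ S.m Q' T' ≫ S.π T' t (hT ht) := by rw [hv'.2 t ht]
      _ = (u' ≫ S.m Q' T') ≫ S.π T' t (hT ht) := by simp
      _ = S.m Q T' ≫ S.π T' t (hT ht) := by rw [hu'.2]
      _ = v ≫ S.m Q T ≫ S.π T t ht := (hv.2 t ht).symm
      _ = v ≫ (u ≫ S.m Q' T) ≫ S.π T t ht := by rw [hu.2]
      _ = ((v ≫ u) ≫ S.m Q' T) ≫ S.π T t ht := by simp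
  rw [hd (v ≫ u) ⟨rfl, rfl⟩, hd (u' ≫ v') ⟨h1, h2⟩]

end Setup

/-- if `u_{Q⊆Q',T'}` is an isomorphism then so is `u_{Q⊆Q',T}`, and
dually if `v_{Q',T⊆T'}` is an isomorphism then so is `v_{Q,T⊆T'}`. -/
theorem stmt15 {A : Type} [Fintype A] {C : Type*} [Category C]
    (E M : MorphismProperty C) (fs : FactSys E M) {X Y : C}
    (ℓ : List A → (X ⟶ Y)) (S : Setup A E M X Y ℓ)
    (Q Q' T T' : Set (List A)) (hQ : Q ⊆ Q') (hT : T ⊆ T') :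
    (∀ u' : S.N Q T' ⟶ S.N Q' T', S.IsU T' hQ u' → IsIso u' →
      ∀ u : S.N Q T ⟶ S.N Q' T, S.IsU T hQ u → IsIso u) ∧
    (∀ v' : S.N Q' T' ⟶ S.N Q' T, S.IsV Q' hT v' → IsIso v' →
      ∀ v : S.N Q T' ⟶ S.N Q T, S.IsV Q hT v → IsIso v) := by
  constructor
  · intro u' hu' hiso u hu
    obtain ⟨vQ, hvQ⟩ := S.existsV fs Q hT
    obtain ⟨vQ', hvQ'⟩ := S.existsV fs Q' hT
    have hsq := S.square fs hvQ hu hu' hvQ'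
    have hE : E (vQ ≫ u) := by
      rw [hsq]
      exact fs.E_comp u' vQ' (fs.E_iso u' hiso) (S.E_of_isV fs hvQ')
    exact fs.isIso_of_EM u (fs.E_cancel vQ u (S.E_of_isV fs hvQ) hE)
      (S.M_of_isU fs hu)
  · intro v' hv' hiso v hv
    obtain ⟨uT, huT⟩ := S.existsU fs T hQ
    obtain ⟨uT', huT'⟩ := S.existsU fs T' hQ
    have hsq := S.square fs hv huT huT' hv'
    have hM : M (v ≫ uT) := by
      rw [hsq]
      exact fs.M_comp uT' v' (S.M_of_isU fs huT') (fs.M_iso v' hiso)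
    exact fs.isIso_of_EM v (S.E_of_isV fs hv)
      (fs.M_cancel v uT (S.M_of_isU fs huT) hM)
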